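/- Fix constants a, b > 0 with a ≠ b and t ∈ (0,1). Let p_n = a (log n)/n and q_n = b (log n)/n. Then, as n → ∞, the scaled Chernoff coefficient of Bernoulli distributions satisfies (n/log n) · (1−t) D_t(Ber(p_n) ‖ Ber(q_n)) → t·a + (1−t)·b − a^t b^{1−t}; equivalently (1−t)D_t(Ber(p_n)‖Ber(q_n)) = (1+o(1)) (log n / n) [t a + (1−t) b − a^t b^{1−t}]. -/

import Mathlib

open Filter

noncomputable section

/-- Rényi divergence of order `t` between `Ber(p)` and `Ber(q)`:
`D_t(Ber(p)‖Ber(q)) = (1/(t−1)) log(p^t q^{1−t} + (1−p)^t (1−q)^{1−t})`. -/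
def renyiBer (t p q : ℝ) : ℝ :=
  (1 / (t - 1)) * Real.log (p ^ t * q ^ (1 - t) + (1 - p) ^ t * (1 - q) ^ (1 - t))

lemma aux_tendsto (a b t : ℝ) (ht0 : 0 < t) (ht1 : t < 1) :
    Tendsto (fun L : ℝ =>
        -(Real.log (a ^ t * b ^ (1 - t) * L + (1 - a * L) ^ t * (1 - b * L) ^ (1 - t)) / L))
      (nhdsWithin 0 (Set.Ioi 0)) (nhds (t * a + (1 - t) * b - a ^ t * b ^ (1 - t))) := by
  set c : ℝ := a ^ t * b ^ (1 - t) with hc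
  have h1 : HasDerivAt (fun L : ℝ => 1 - a * L) (-a) (0 : ℝ) := by
    simpa using ((hasDerivAt_id (0 : ℝ)).const_mul a).const_sub 1
  have h1b : HasDerivAt (fun L : ℝ => 1 - b * L) (-b) (0 : ℝ) := by
    simpa using ((hasDerivAt_id (0 : ℝ)).const_mul b).const_sub 1
  have h2 : HasDerivAt (fun L : ℝ => (1 - a * L) ^ t) (-(t * a)) (0 : ℝ) := by
    have := h1.rpow_const (p := t) (Or.inl (by norm_num))
    simpa [Real.one_rpow, mul_comm] using this
  have h3 : HasDerivAt (fun L : ℝ => (1 - b * L) ^ (1 - t)) (-((1 - t) * b)) (0 : ℝ) := by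
    have := h1b.rpow_const (p := 1 - t) (Or.inl (by norm_num))
    simpa [Real.one_rpow, mul_comm] using this
  have h4 : HasDerivAt (fun L : ℝ => c * L) c (0 : ℝ) := by
    simpa using (hasDerivAt_id (0 : ℝ)).const_mul c
  have h5 : HasDerivAt (fun L : ℝ => c * L + (1 - a * L) ^ t * (1 - b * L) ^ (1 - t))
      (c - (t * a + (1 - t) * b)) (0 : ℝ) := by
    have hprod := h2.mul h3
    have := h4.add hprod
    refine this.congr_deriv ?_
    simp [Real.one_rpow]
    ring
  have hpos : (fun L : ℝ => c * L + (1 - a * L) ^ t * (1 - b * L) ^ (1 - t)) 0 ≠ 0 := by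
    simp [Real.one_rpow]
  have hg : HasDerivAt
      (fun L : ℝ => Real.log (c * L + (1 - a * L) ^ t * (1 - b * L) ^ (1 - t)))
      ((c - (t * a + (1 - t) * b)) / 1) (0 : ℝ) := by
    have := h5.log hpos
    simpa [Real.one_rpow] using this
  have hslope := hasDerivAt_iff_tendsto_slope.mp hg
  have hg0 : Real.log (c * 0 + (1 - a * 0) ^ t * (1 - b * 0) ^ (1 - t)) = 0 := by
    simp [Real.one_rpow]
  have hslope' : Tendsto
      (fun L : ℝ => Real.log (c * L + (1 - a * L) ^ t * (1 - b * L) ^ (1 - t)) / L)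
      (nhdsWithin 0 (Set.Ioi 0)) (nhds (c - (t * a + (1 - t) * b))) := by
    have hmono : Tendsto (slope (fun L : ℝ =>
        Real.log (c * L + (1 - a * L) ^ t * (1 - b * L) ^ (1 - t))) 0)
        (nhdsWithin 0 (Set.Ioi 0)) (nhds ((c - (t * a + (1 - t) * b)) / 1)) :=
      hslope.mono_left (nhdsWithin_mono _ (fun x hx => ne_of_gt hx))
    have heq : ∀ L : ℝ, slope (fun L : ℝ =>
        Real.log (c * L + (1 - a * L) ^ t * (1 - b * L) ^ (1 - t))) 0 L
        = Real.log (c * L + (1 - a * L) ^ t * (1 - b * L) ^ (1 - t)) / L := by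
      intro L
      simp [slope_def_field, Real.one_rpow]
    simpa [div_one] using hmono.congr heq
  have := hslope'.neg
  convert this using 2
  ring

/-- For `p_n = a log n / n` and `q_n = b log n / n` with constants
`a, b > 0`, `a ≠ b`, and `t ∈ (0,1)`,
`(n/log n) (1−t) D_t(Ber(p_n) ‖ Ber(q_n)) → t a + (1−t) b − a^t b^{1−t}`. -/
theorem bernoulli_chernoff_coefficient_asymptotics
    (a b : ℝ) (ha : 0 < a) (hb : 0 < b) (hab : a ≠ b)
    (t : ℝ) (ht : t ∈ Set.Ioo (0:ℝ) 1) :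
    Tendsto (fun n : ℕ =>
        ((n : ℝ) / Real.log n) *
          ((1 - t) * renyiBer t (a * Real.log n / n) (b * Real.log n / n)))
      atTop (nhds (t * a + (1 - t) * b - a ^ t * b ^ (1 - t))) := by
  obtain ⟨ht0, ht1⟩ := ht
  have hL : Tendsto (fun n : ℕ => Real.log n / n) atTop (nhdsWithin 0 (Set.Ioi 0)) := by
    rw [tendsto_nhdsWithin_iff]
    constructor
    · have h0 : Tendsto (fun x : ℝ => Real.log x / x) atTop (nhds 0) :=
        Real.isLittleO_log_id_atTop.tendsto_div_nhds_zero
      exact h0.comp tendsto_natCast_atTop_atTop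
    · filter_upwards [eventually_ge_atTop 2] with n hn
      have hn1 : (1 : ℝ) < (n : ℝ) := by exact_mod_cast Nat.lt_of_lt_of_le one_lt_two hn
      exact div_pos (Real.log_pos hn1) (by linarith)
  have key := ((aux_tendsto a b t ht0 ht1).comp hL)
  refine key.congr' ?_
  filter_upwards [eventually_ge_atTop 2] with n hn
  have hn1 : (1 : ℝ) < (n : ℝ) := by exact_mod_cast Nat.lt_of_lt_of_le one_lt_two hn
  have hlogpos : 0 < Real.log n := Real.log_pos hn1
  have hnpos : (0 : ℝ) < (n : ℝ) := by linarith
  set L : ℝ := Real.log n / n with hLdef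
  have hLpos : 0 < L := div_pos hlogpos hnpos
  have hadL : a * Real.log n / n = a * L := by rw [hLdef]; ring
  have hbdL : b * Real.log n / n = b * L := by rw [hLdef]; ring
  have hr : (a * L) ^ t * (b * L) ^ (1 - t) = a ^ t * b ^ (1 - t) * L := by
    calc (a * L) ^ t * (b * L) ^ (1 - t)
        = (a ^ t * b ^ (1 - t)) * (L ^ t * L ^ (1 - t)) := by
          rw [Real.mul_rpow ha.le hLpos.le, Real.mul_rpow hb.le hLpos.le]; ring
      _ = a ^ t * b ^ (1 - t) * L := by rw [← Real.rpow_add hLpos]; norm_num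
  have hninv : (n : ℝ) / Real.log n = 1 / L := by
    rw [hLdef, one_div_div]
  simp only [Function.comp]
  rw [← hLdef]
  simp only [renyiBer, hadL, hbdL, hr, hninv]
  have ht1' : t - 1 ≠ 0 := by intro h; linarith
  have hLne : L ≠ 0 := hLpos.ne'
  clear_value L
  field_simp
  ring

end
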